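/- Let G be a 3-partite graph with nonempty parts V1, V2, V3 such that d(V_i,V_j) ≥ 1/2 for all i ≠ j, and let X be an independent set in G with |X ∩ V_i| ≥ |V_i|/2 for each i = 1,2,3, such that at least two of these six inequalities (the three density inequalities and the three intersection inequalities) are strict. Then G contains a triangle. -/
import Mathlib
set_option linter.unusedSectionVars false

open SimpleGraph Finset

section TriAux

variable {α : Type*} [Fintype α] [DecidableEq α]

/-- degree of `u` into `T` -/
def triDS (G : SimpleGraph α) [DecidableRel G.Adj] (u : α) (T : Finset α) : ℕ :=
  (T.filter (G.Adj u)).card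

/-- number of (ordered) edges between `S` and `T` -/
def triE (G : SimpleGraph α) [DecidableRel G.Adj] (S T : Finset α) : ℕ :=
  ∑ u ∈ S, triDS G u T

variable {G : SimpleGraph α} [DecidableRel G.Adj]

lemma triDS_le (u : α) (T : Finset α) : triDS G u T ≤ T.card :=
  card_filter_le _ _

lemma triDS_union {T T' : Finset α} (h : Disjoint T T') (u : α) :
    triDS G u (T ∪ T') = triDS G u T + triDS G u T' := by
  unfold triDS
  rw [filter_union, card_union_of_disjoint (disjoint_filter_filter h)]

lemma triDS_split (u : α) (T X : Finset α) :
    triDS G u T = triDS G u (T ∩ X) + triDS G u (T \ X) := by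
  have h : T ∩ X ∪ T \ X = T := by
    rw [Finset.union_comm, Finset.sdiff_union_inter]
  conv_lhs => rw [← h]
  exact triDS_union ((disjoint_sdiff_inter T X).symm) u

lemma triDS_eq_sum (u : α) (T : Finset α) :
    triDS G u T = ∑ v ∈ T, if G.Adj u v then 1 else 0 := by
  rw [triDS, card_filter]

lemma triDS_rev (v : α) (T : Finset α) :
    (T.filter (fun u => G.Adj u v)).card = triDS G v T := by
  unfold triDS
  congr 1
  apply filter_congr
  intro x _
  simp [G.adj_comm]

lemma triE_comm (S T : Finset α) : triE G S T = triE G T S := by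
  unfold triE
  simp only [triDS_eq_sum]
  rw [Finset.sum_comm]
  apply Finset.sum_congr rfl
  intro v _
  apply Finset.sum_congr rfl
  intro u _
  simp [G.adj_comm]

lemma triE_le (S T : Finset α) : triE G S T ≤ S.card * T.card := by
  unfold triE
  calc ∑ u ∈ S, triDS G u T ≤ ∑ u ∈ S, T.card := Finset.sum_le_sum fun u _ => triDS_le u T
  _ = S.card * T.card := by rw [Finset.sum_const, smul_eq_mul]

lemma triDS_zero {X : Finset α} (hX : ∀ x ∈ X, ∀ y ∈ X, ¬ G.Adj x y)
    {u : α} (hu : u ∈ X) {T : Finset α} (hT : T ⊆ X) : triDS G u T = 0 := by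
  unfold triDS
  rw [Finset.card_eq_zero, Finset.filter_eq_empty_iff]
  intro v hv
  exact hX u hu v (hT hv)

lemma triDS_add_le (hG : G.CliqueFree 3) {u v : α} (huv : G.Adj u v) (T : Finset α) :
    triDS G u T + triDS G v T ≤ T.card := by
  unfold triDS
  rw [← card_union_of_disjoint]
  · exact card_le_card (by
      intro w hw
      rcases Finset.mem_union.1 hw with h | h
      exacts [Finset.mem_of_mem_filter _ h, Finset.mem_of_mem_filter _ h])
  · rw [Finset.disjoint_left]
    intro w hw1 hw2
    have h1 := (Finset.mem_filter.1 hw1).2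
    have h2 := (Finset.mem_filter.1 hw2).2
    exact hG {u, v, w} (is3Clique_triple_iff.2 ⟨huv, h1, h2⟩)

end TriAux
section TriAux2
variable {α : Type*} [Fintype α] [DecidableEq α] {G : SimpleGraph α} [DecidableRel G.Adj]

lemma sum_ite_left (S T : Finset α) (φ : α → ℕ) :
    ∑ u ∈ S, ∑ v ∈ T, (if G.Adj u v then φ u else 0) = ∑ u ∈ S, triDS G u T * φ u := by
  apply Finset.sum_congr rfl
  intro u _
  rw [← Finset.sum_filter, Finset.sum_const, smul_eq_mul]
  rfl

lemma sum_ite_right (S T : Finset α) (φ : α → ℕ) :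
    ∑ u ∈ S, ∑ v ∈ T, (if G.Adj u v then φ v else 0) = ∑ v ∈ T, triDS G v S * φ v := by
  rw [Finset.sum_comm]
  apply Finset.sum_congr rfl
  intro v _
  rw [← Finset.sum_filter, Finset.sum_const, smul_eq_mul, triDS_rev]

lemma sum_ite_cc (S T : Finset α) (c : ℕ) :
    ∑ u ∈ S, ∑ v ∈ T, (if G.Adj u v then c else 0) = triE G S T * c := by
  rw [sum_ite_left, triE, Finset.sum_mul]

lemma sum_ite_add (S T : Finset α) (φ ψ : α → α → ℕ) :
    ∑ u ∈ S, ∑ v ∈ T, (if G.Adj u v then φ u v + ψ u v else 0)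
    = (∑ u ∈ S, ∑ v ∈ T, (if G.Adj u v then φ u v else 0))
      + ∑ u ∈ S, ∑ v ∈ T, (if G.Adj u v then ψ u v else 0) := by
  rw [← Finset.sum_add_distrib]
  apply Finset.sum_congr rfl
  intro u _
  rw [← Finset.sum_add_distrib]
  apply Finset.sum_congr rfl
  intro v _
  by_cases hadj : G.Adj u v <;> simp [hadj]

lemma sum_ite_mono (S T : Finset α) (F ψ : α → α → ℕ)
    (h : ∀ u ∈ S, ∀ v ∈ T, G.Adj u v → F u v ≤ ψ u v) :
    ∑ u ∈ S, ∑ v ∈ T, (if G.Adj u v then F u v else 0) ≤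
      ∑ u ∈ S, ∑ v ∈ T, (if G.Adj u v then ψ u v else 0) := by
  apply Finset.sum_le_sum
  intro u hu
  apply Finset.sum_le_sum
  intro v hv
  by_cases hadj : G.Adj u v
  · simpa [hadj] using h u hu v hv hadj
  · simp [hadj]

lemma pairUpper (hG : G.CliqueFree 3) {X : Finset α} (hX : ∀ x ∈ X, ∀ y ∈ X, ¬ G.Adj x y)
    (V1 V2 V3 : Finset α) :
    (∑ u ∈ V1, triDS G u V2 * triDS G u V3) + (∑ v ∈ V2, triDS G v V1 * triDS G v V3) ≤
      (V3 \ X).card * (triE G (V1 ∩ X) (V2 \ X) + triE G (V2 ∩ X) (V1 \ X))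
      + (V3 ∩ X).card * triE G (V1 \ X) (V2 \ X)
      + (∑ u ∈ V1 \ X, (triDS G u (V2 ∩ X) * triDS G u (V3 ∩ X)
            + triDS G u (V2 \ X) * triDS G u (V3 \ X)))
      + (∑ v ∈ V2 \ X, (triDS G v (V1 ∩ X) * triDS G v (V3 ∩ X)
            + triDS G v (V1 \ X) * triDS G v (V3 \ X))) := by
  have hV1 : V1 ∩ X ∪ V1 \ X = V1 := by rw [Finset.union_comm, Finset.sdiff_union_inter]
  have hV2 : V2 ∩ X ∪ V2 \ X = V2 := by rw [Finset.union_comm, Finset.sdiff_union_inter]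
  have hd1 : Disjoint (V1 ∩ X) (V1 \ X) := (disjoint_sdiff_inter V1 X).symm
  have hd2 : Disjoint (V2 ∩ X) (V2 \ X) := (disjoint_sdiff_inter V2 X).symm
  -- LHS as a double sum
  have L : (∑ u ∈ V1, triDS G u V2 * triDS G u V3) + (∑ v ∈ V2, triDS G v V1 * triDS G v V3)
      = ∑ u ∈ V1, ∑ v ∈ V2, (if G.Adj u v then triDS G u V3 + triDS G v V3 else 0) := by
    rw [sum_ite_add V1 V2 (fun u _ => triDS G u V3) (fun _ v => triDS G v V3),
      sum_ite_left V1 V2 (fun u => triDS G u V3),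
      sum_ite_right V1 V2 (fun v => triDS G v V3)]
  rw [L]
  -- split the double sum into four blocks
  have hsplit1 : ∀ f : α → ℕ, ∑ u ∈ V1, f u = (∑ u ∈ V1 ∩ X, f u) + ∑ u ∈ V1 \ X, f u :=
    fun f => by rw [← Finset.sum_union hd1, hV1]
  have hsplit2 : ∀ f : α → ℕ, ∑ v ∈ V2, f v = (∑ v ∈ V2 ∩ X, f v) + ∑ v ∈ V2 \ X, f v :=
    fun f => by rw [← Finset.sum_union hd2, hV2]
  rw [hsplit1 (fun u => ∑ v ∈ V2, (if G.Adj u v then triDS G u V3 + triDS G v V3 else 0))]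
  rw [show (∑ u ∈ V1 ∩ X, ∑ v ∈ V2, (if G.Adj u v then triDS G u V3 + triDS G v V3 else 0))
      = (∑ u ∈ V1 ∩ X, ∑ v ∈ V2 ∩ X, (if G.Adj u v then triDS G u V3 + triDS G v V3 else 0))
        + (∑ u ∈ V1 ∩ X, ∑ v ∈ V2 \ X, (if G.Adj u v then triDS G u V3 + triDS G v V3 else 0))
      from by
        rw [← Finset.sum_add_distrib]
        exact Finset.sum_congr rfl fun u _ =>
          hsplit2 (fun v => if G.Adj u v then triDS G u V3 + triDS G v V3 else 0)]
  rw [show (∑ u ∈ V1 \ X, ∑ v ∈ V2, (if G.Adj u v then triDS G u V3 + triDS G v V3 else 0))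
      = (∑ u ∈ V1 \ X, ∑ v ∈ V2 ∩ X, (if G.Adj u v then triDS G u V3 + triDS G v V3 else 0))
        + (∑ u ∈ V1 \ X, ∑ v ∈ V2 \ X, (if G.Adj u v then triDS G u V3 + triDS G v V3 else 0))
      from by
        rw [← Finset.sum_add_distrib]
        exact Finset.sum_congr rfl fun u _ =>
          hsplit2 (fun v => if G.Adj u v then triDS G u V3 + triDS G v V3 else 0)]
  -- block AA is zero
  have hAA : (∑ u ∈ V1 ∩ X, ∑ v ∈ V2 ∩ X,
      (if G.Adj u v then triDS G u V3 + triDS G v V3 else 0)) = 0 := by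
    apply Finset.sum_eq_zero
    intro u hu
    apply Finset.sum_eq_zero
    intro v hv
    rw [if_neg (hX u (Finset.mem_inter.1 hu).2 v (Finset.mem_inter.1 hv).2)]
  -- block AB
  have hAB : (∑ u ∈ V1 ∩ X, ∑ v ∈ V2 \ X,
      (if G.Adj u v then triDS G u V3 + triDS G v V3 else 0)) ≤
      triE G (V1 ∩ X) (V2 \ X) * (V3 \ X).card
      + ∑ v ∈ V2 \ X, triDS G v (V1 ∩ X) * triDS G v (V3 ∩ X) := by
    calc _ ≤ ∑ u ∈ V1 ∩ X, ∑ v ∈ V2 \ X,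
        (if G.Adj u v then (V3 \ X).card + triDS G v (V3 ∩ X) else 0) := by
          apply sum_ite_mono
          intro u hu v _ hadj
          rw [triDS_split u V3 X, triDS_split v V3 X,
            triDS_zero hX (Finset.mem_inter.1 hu).2 Finset.inter_subset_right]
          have := triDS_add_le hG hadj (V3 \ X)
          omega
      _ = _ := by
          rw [sum_ite_add (V1 ∩ X) (V2 \ X) (fun _ _ => (V3 \ X).card)
              (fun _ v => triDS G v (V3 ∩ X)),
            sum_ite_cc, sum_ite_right (V1 ∩ X) (V2 \ X) (fun v => triDS G v (V3 ∩ X))]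
  -- block BA
  have hBA : (∑ u ∈ V1 \ X, ∑ v ∈ V2 ∩ X,
      (if G.Adj u v then triDS G u V3 + triDS G v V3 else 0)) ≤
      triE G (V2 ∩ X) (V1 \ X) * (V3 \ X).card
      + ∑ u ∈ V1 \ X, triDS G u (V2 ∩ X) * triDS G u (V3 ∩ X) := by
    calc _ ≤ ∑ u ∈ V1 \ X, ∑ v ∈ V2 ∩ X,
        (if G.Adj u v then (V3 \ X).card + triDS G u (V3 ∩ X) else 0) := by
          apply sum_ite_mono
          intro u _ v hv hadj
          rw [triDS_split u V3 X, triDS_split v V3 X,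
            triDS_zero hX (Finset.mem_inter.1 hv).2 Finset.inter_subset_right]
          have := triDS_add_le hG hadj (V3 \ X)
          omega
      _ = _ := by
          rw [sum_ite_add (V1 \ X) (V2 ∩ X) (fun _ _ => (V3 \ X).card)
              (fun u _ => triDS G u (V3 ∩ X)),
            sum_ite_cc, sum_ite_left (V1 \ X) (V2 ∩ X) (fun u => triDS G u (V3 ∩ X)),
            triE_comm]
  -- block BB
  have hBB : (∑ u ∈ V1 \ X, ∑ v ∈ V2 \ X,
      (if G.Adj u v then triDS G u V3 + triDS G v V3 else 0)) ≤
      triE G (V1 \ X) (V2 \ X) * (V3 ∩ X).card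
      + ((∑ u ∈ V1 \ X, triDS G u (V2 \ X) * triDS G u (V3 \ X))
        + ∑ v ∈ V2 \ X, triDS G v (V1 \ X) * triDS G v (V3 \ X)) := by
    calc _ ≤ ∑ u ∈ V1 \ X, ∑ v ∈ V2 \ X,
        (if G.Adj u v then (V3 ∩ X).card + (triDS G u (V3 \ X) + triDS G v (V3 \ X)) else 0) := by
          apply sum_ite_mono
          intro u _ v _ hadj
          rw [triDS_split u V3 X, triDS_split v V3 X]
          have := triDS_add_le hG hadj (V3 ∩ X)
          omega
      _ = _ := by
          rw [sum_ite_add (V1 \ X) (V2 \ X) (fun _ _ => (V3 ∩ X).card)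
              (fun u v => triDS G u (V3 \ X) + triDS G v (V3 \ X)),
            sum_ite_cc,
            sum_ite_add (V1 \ X) (V2 \ X) (fun u _ => triDS G u (V3 \ X))
              (fun _ v => triDS G v (V3 \ X)),
            sum_ite_left (V1 \ X) (V2 \ X) (fun u => triDS G u (V3 \ X)),
            sum_ite_right (V1 \ X) (V2 \ X) (fun v => triDS G v (V3 \ X))]
  have htot := add_le_add (add_le_add hAA.le hAB) (add_le_add hBA hBB)
  refine le_trans htot ?_
  have e1 : (∑ u ∈ V1 \ X, (triDS G u (V2 ∩ X) * triDS G u (V3 ∩ X)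
        + triDS G u (V2 \ X) * triDS G u (V3 \ X)))
      = (∑ u ∈ V1 \ X, triDS G u (V2 ∩ X) * triDS G u (V3 ∩ X))
        + ∑ u ∈ V1 \ X, triDS G u (V2 \ X) * triDS G u (V3 \ X) :=
    Finset.sum_add_distrib
  have e2 : (∑ v ∈ V2 \ X, (triDS G v (V1 ∩ X) * triDS G v (V3 ∩ X)
        + triDS G v (V1 \ X) * triDS G v (V3 \ X)))
      = (∑ v ∈ V2 \ X, triDS G v (V1 ∩ X) * triDS G v (V3 ∩ X))
        + ∑ v ∈ V2 \ X, triDS G v (V1 \ X) * triDS G v (V3 \ X) :=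
    Finset.sum_add_distrib
  linarith
end TriAux2
section TriAux3
variable {α : Type*} [Fintype α] [DecidableEq α] {G : SimpleGraph α} [DecidableRel G.Adj]

lemma quadA (x y c d : ℕ) (hx : x ≤ c) (hy : y ≤ d) : d * x + c * y ≤ x * y + c * d := by
  have h := mul_nonneg (sub_nonneg.2 (by exact_mod_cast hx : (x : ℤ) ≤ c))
    (sub_nonneg.2 (by exact_mod_cast hy : (y : ℤ) ≤ d))
  zify
  nlinarith [h]

lemma quadB (p q r s a b c d : ℕ) (hp : p ≤ a) (hq : q ≤ b) (hr : r ≤ c) (hs : s ≤ d) :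
    p * r + q * s + (d * p + a * s) + (b * r + c * q)
      ≤ (p + q) * (r + s) + (a * d + c * b) := by
  have h1 := mul_nonneg (sub_nonneg.2 (by exact_mod_cast hp : (p : ℤ) ≤ a))
    (sub_nonneg.2 (by exact_mod_cast hs : (s : ℤ) ≤ d))
  have h2 := mul_nonneg (sub_nonneg.2 (by exact_mod_cast hr : (r : ℤ) ≤ c))
    (sub_nonneg.2 (by exact_mod_cast hq : (q : ℤ) ≤ b))
  zify
  nlinarith [h1, h2]

lemma partLowerA {X : Finset α} (hX : ∀ x ∈ X, ∀ y ∈ X, ¬ G.Adj x y) (V1 V2 V3 : Finset α) :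
    (V3 \ X).card * triE G (V1 ∩ X) (V2 \ X) + (V2 \ X).card * triE G (V1 ∩ X) (V3 \ X)
      ≤ (∑ u ∈ V1 ∩ X, triDS G u V2 * triDS G u V3)
        + (V1 ∩ X).card * ((V2 \ X).card * (V3 \ X).card) := by
  rw [triE, triE, Finset.mul_sum, Finset.mul_sum, ← Finset.sum_add_distrib]
  have : (V1 ∩ X).card * ((V2 \ X).card * (V3 \ X).card)
      = ∑ _u ∈ V1 ∩ X, (V2 \ X).card * (V3 \ X).card := by
    rw [Finset.sum_const, smul_eq_mul]
  rw [this, ← Finset.sum_add_distrib]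
  apply Finset.sum_le_sum
  intro u hu
  have hu' : u ∈ X := (Finset.mem_inter.1 hu).2
  rw [triDS_split u V2 X, triDS_split u V3 X,
    triDS_zero hX hu' Finset.inter_subset_right,
    triDS_zero hX hu' Finset.inter_subset_right]
  simp only [zero_add]
  exact quadA _ _ _ _ (triDS_le u (V2 \ X)) (triDS_le u (V3 \ X))

lemma partLowerB (V1 V2 V3 : Finset α) (X : Finset α) :
    (∑ u ∈ V1 \ X, (triDS G u (V2 ∩ X) * triDS G u (V3 ∩ X)
        + triDS G u (V2 \ X) * triDS G u (V3 \ X)))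
      + ((V3 \ X).card * triE G (V1 \ X) (V2 ∩ X) + (V2 ∩ X).card * triE G (V1 \ X) (V3 \ X))
      + ((V2 \ X).card * triE G (V1 \ X) (V3 ∩ X) + (V3 ∩ X).card * triE G (V1 \ X) (V2 \ X))
      ≤ (∑ u ∈ V1 \ X, triDS G u V2 * triDS G u V3)
        + (V1 \ X).card * ((V2 ∩ X).card * (V3 \ X).card + (V3 ∩ X).card * (V2 \ X).card) := by
  rw [triE, triE, triE, triE, Finset.mul_sum, Finset.mul_sum, Finset.mul_sum, Finset.mul_sum]
  rw [← Finset.sum_add_distrib, ← Finset.sum_add_distrib, ← Finset.sum_add_distrib]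
  have : (V1 \ X).card * ((V2 ∩ X).card * (V3 \ X).card + (V3 ∩ X).card * (V2 \ X).card)
      = ∑ _u ∈ V1 \ X, ((V2 ∩ X).card * (V3 \ X).card + (V3 ∩ X).card * (V2 \ X).card) := by
    rw [Finset.sum_const, smul_eq_mul]
  rw [this]
  rw [show (∑ u ∈ V1 \ X, triDS G u V2 * triDS G u V3)
      + (∑ _u ∈ V1 \ X, ((V2 ∩ X).card * (V3 \ X).card + (V3 ∩ X).card * (V2 \ X).card))
      = ∑ u ∈ V1 \ X, (triDS G u V2 * triDS G u V3
        + ((V2 ∩ X).card * (V3 \ X).card + (V3 ∩ X).card * (V2 \ X).card)) from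
    (Finset.sum_add_distrib).symm]
  rw [← Finset.sum_add_distrib]
  apply Finset.sum_le_sum
  intro u _
  rw [triDS_split u V2 X, triDS_split u V3 X]
  exact quadB _ _ _ _ _ _ _ _ (triDS_le u (V2 ∩ X)) (triDS_le u (V2 \ X))
    (triDS_le u (V3 ∩ X)) (triDS_le u (V3 \ X))

lemma triE_union_left {S S' : Finset α} (h : Disjoint S S') (T : Finset α) :
    triE G (S ∪ S') T = triE G S T + triE G S' T :=
  Finset.sum_union h

lemma triE_split_right (S T X : Finset α) :
    triE G S T = triE G S (T ∩ X) + triE G S (T \ X) := by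
  unfold triE
  rw [← Finset.sum_add_distrib]
  exact Finset.sum_congr rfl fun u _ => triDS_split u T X

lemma triE_zero {X : Finset α} (hX : ∀ x ∈ X, ∀ y ∈ X, ¬ G.Adj x y)
    {S T : Finset α} (hS : S ⊆ X) (hT : T ⊆ X) : triE G S T = 0 :=
  Finset.sum_eq_zero fun u hu => triDS_zero hX (hS hu) hT

lemma triE_decomp {X : Finset α} (hX : ∀ x ∈ X, ∀ y ∈ X, ¬ G.Adj x y) (V W : Finset α) :
    triE G V W = triE G (V ∩ X) (W \ X)
      + (triE G (V \ X) (W ∩ X) + triE G (V \ X) (W \ X)) := by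
  have hV : V ∩ X ∪ V \ X = V := by rw [Finset.union_comm, Finset.sdiff_union_inter]
  conv_lhs => rw [← hV]
  rw [triE_union_left (disjoint_sdiff_inter V X).symm,
    triE_split_right (V ∩ X) W X, triE_split_right (V \ X) W X,
    triE_zero hX Finset.inter_subset_right Finset.inter_subset_right, zero_add]

lemma grand (hG : G.CliqueFree 3) {X : Finset α} (hX : ∀ x ∈ X, ∀ y ∈ X, ¬ G.Adj x y)
    (V1 V2 V3 : Finset α)
    (hb1 : (V1 \ X).card ≤ (V1 ∩ X).card)
    (hb2 : (V2 \ X).card ≤ (V2 ∩ X).card)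
    (hb3 : (V3 \ X).card ≤ (V3 ∩ X).card) :
    (V3 \ X).card * triE G V1 V2 + (V2 \ X).card * triE G V1 V3
      + (V1 \ X).card * triE G V2 V3
    ≤ 2 * ((V1 ∩ X).card * ((V2 \ X).card * (V3 \ X).card)
        + (V2 ∩ X).card * ((V1 \ X).card * (V3 \ X).card)
        + (V3 ∩ X).card * ((V1 \ X).card * (V2 \ X).card)) := by
  have U12 := pairUpper hG hX V1 V2 V3
  have U13 := pairUpper hG hX V1 V3 V2
  have U23 := pairUpper hG hX V2 V3 V1
  have LA1 := partLowerA hX V1 V2 V3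
  have LA2 := partLowerA hX V2 V1 V3
  have LA3 := partLowerA hX V3 V1 V2
  have LB1 := partLowerB (G := G) V1 V2 V3 X
  have LB2 := partLowerB (G := G) V2 V1 V3 X
  have LB3 := partLowerB (G := G) V3 V1 V2 X
  -- commutativity of products inside sums
  have mc : ∀ (S A B : Finset α), (∑ u ∈ S, triDS G u A * triDS G u B)
      = ∑ u ∈ S, triDS G u B * triDS G u A :=
    fun S A B => Finset.sum_congr rfl fun u _ => mul_comm _ _
  have mc2 : ∀ (S A B C D : Finset α),
      (∑ u ∈ S, (triDS G u A * triDS G u B + triDS G u C * triDS G u D))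
      = ∑ u ∈ S, (triDS G u B * triDS G u A + triDS G u D * triDS G u C) :=
    fun S A B C D => Finset.sum_congr rfl fun u _ => by ring
  rw [mc V1 V3 V2, mc2 (V1 \ X) (V3 ∩ X) (V2 ∩ X) (V3 \ X) (V2 \ X)] at U13
  rw [mc V2 V3 V1, mc V3 V2 V1,
    mc2 (V2 \ X) (V3 ∩ X) (V1 ∩ X) (V3 \ X) (V1 \ X),
    mc2 (V3 \ X) (V2 ∩ X) (V1 ∩ X) (V2 \ X) (V1 \ X)] at U23
  -- split the per-part product sums over A ∪ B
  have hsp : ∀ (W A B : Finset α), (∑ u ∈ W, triDS G u A * triDS G u B)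
      = (∑ u ∈ W ∩ X, triDS G u A * triDS G u B) + ∑ u ∈ W \ X, triDS G u A * triDS G u B := by
    intro W A B
    have hW : W ∩ X ∪ W \ X = W := by rw [Finset.union_comm, Finset.sdiff_union_inter]
    rw [← hW, Finset.sum_union (disjoint_sdiff_inter W X).symm]
    congr 1 <;> apply Finset.sum_congr (by rw [hW]) (fun _ _ => rfl)
  have S1 := hsp V1 V2 V3
  have S2 := hsp V2 V1 V3
  have S3 := hsp V3 V1 V2
  -- edge count decompositions
  have D12 := triE_decomp hX V1 V2
  have D13 := triE_decomp hX V1 V3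
  have D23 := triE_decomp hX V2 V3
  -- symmetry of edge counts
  have C1 : triE G (V1 \ X) (V2 ∩ X) = triE G (V2 ∩ X) (V1 \ X) := triE_comm (V1 \ X) (V2 ∩ X)
  have C2 : triE G (V1 \ X) (V3 ∩ X) = triE G (V3 ∩ X) (V1 \ X) := triE_comm (V1 \ X) (V3 ∩ X)
  have C3 : triE G (V2 \ X) (V3 ∩ X) = triE G (V3 ∩ X) (V2 \ X) := triE_comm (V2 \ X) (V3 ∩ X)
  have C4 : triE G (V1 \ X) (V2 \ X) = triE G (V2 \ X) (V1 \ X) := triE_comm (V1 \ X) (V2 \ X)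
  have C5 : triE G (V1 \ X) (V3 \ X) = triE G (V3 \ X) (V1 \ X) := triE_comm (V1 \ X) (V3 \ X)
  have C6 : triE G (V2 \ X) (V3 \ X) = triE G (V3 \ X) (V2 \ X) := triE_comm (V2 \ X) (V3 \ X)
  have C7 : triE G (V1 ∩ X) (V2 \ X) = triE G (V2 \ X) (V1 ∩ X) := triE_comm (V1 ∩ X) (V2 \ X)
  have C8 : triE G (V1 ∩ X) (V3 \ X) = triE G (V3 \ X) (V1 ∩ X) := triE_comm (V1 ∩ X) (V3 \ X)
  have C9 : triE G (V2 ∩ X) (V3 \ X) = triE G (V3 \ X) (V2 ∩ X) := triE_comm (V2 ∩ X) (V3 \ X)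
  have D12' : (V3 \ X).card * triE G V1 V2
      = (V3 \ X).card * triE G (V1 ∩ X) (V2 \ X)
        + ((V3 \ X).card * triE G (V1 \ X) (V2 ∩ X)
          + (V3 \ X).card * triE G (V1 \ X) (V2 \ X)) := by rw [D12]; ring
  have D13' : (V2 \ X).card * triE G V1 V3
      = (V2 \ X).card * triE G (V1 ∩ X) (V3 \ X)
        + ((V2 \ X).card * triE G (V1 \ X) (V3 ∩ X)
          + (V2 \ X).card * triE G (V1 \ X) (V3 \ X)) := by rw [D13]; ring
  have D23' : (V1 \ X).card * triE G V2 V3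
      = (V1 \ X).card * triE G (V2 ∩ X) (V3 \ X)
        + ((V1 \ X).card * triE G (V2 \ X) (V3 ∩ X)
          + (V1 \ X).card * triE G (V2 \ X) (V3 \ X)) := by rw [D23]; ring
  -- b ≤ a times f
  have M1 := Nat.mul_le_mul_right (triE G (V1 \ X) (V2 \ X)) hb3
  have M2 := Nat.mul_le_mul_right (triE G (V1 \ X) (V3 \ X)) hb2
  have M3 := Nat.mul_le_mul_right (triE G (V2 \ X) (V3 \ X)) hb1
  rw [C1, C2] at LB1
  rw [← C7, C3, ← C4] at LB2
  rw [← C8, ← C6, ← C9, ← C5] at LB3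
  rw [C1] at D12'
  rw [C2] at D13'
  rw [C3] at D23'
  linarith [U12, U13, U23, LA1, LA2, LA3, LB1, LB2, LB3, S1, S2, S3,
    D12', D13', D23', M1, M2, M3]
end TriAux3
section TriAux4
variable {α : Type*} [Fintype α] [DecidableEq α] {G : SimpleGraph α} [DecidableRel G.Adj]

lemma triE_eq_card_interedges (S T : Finset α) :
    (G.interedges S T).card = triE G S T := by
  rw [SimpleGraph.interedges, Rel.interedges, Finset.card_filter, Finset.sum_product]
  unfold triE
  apply Finset.sum_congr rfl
  intro u _
  rw [triDS_eq_sum]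

lemma dens_ge {S T : Finset α} (hS : S.Nonempty) (hT : T.Nonempty)
    (h : (1 : ℚ)/2 ≤ G.edgeDensity S T) :
    ((S.card : ℚ) * T.card) ≤ 2 * (triE G S T : ℚ) := by
  have hpos : (0 : ℚ) < (S.card : ℚ) * T.card := by
    have := hS.card_pos
    have := hT.card_pos
    positivity
  rw [SimpleGraph.edgeDensity_def, triE_eq_card_interedges (G := G) S T] at h
  have h' := (le_div_iff₀ hpos).1 (by push_cast at h ⊢; exact h)
  push_cast at h' ⊢
  linarith

lemma dens_gt {S T : Finset α} (hS : S.Nonempty) (hT : T.Nonempty)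
    (h : (1 : ℚ)/2 < G.edgeDensity S T) :
    ((S.card : ℚ) * T.card) < 2 * (triE G S T : ℚ) := by
  have hpos : (0 : ℚ) < (S.card : ℚ) * T.card := by
    have := hS.card_pos
    have := hT.card_pos
    positivity
  rw [SimpleGraph.edgeDensity_def, triE_eq_card_interedges (G := G) S T] at h
  have h' := (lt_div_iff₀ hpos).1 (by push_cast at h ⊢; exact h)
  push_cast at h' ⊢
  linarith

-- If W3 ⊆ X and the (1,3)-density is at least 1/2, then |W1 ∩ X| ≤ |W1 \ X|.
lemma halfFlip {X : Finset α} (hX : ∀ x ∈ X, ∀ y ∈ X, ¬ G.Adj x y)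
    (W1 W3 : Finset α) (h3X : W3 ⊆ X) (hne3 : W3.Nonempty)
    (h13 : ((W1.card : ℚ) * W3.card) ≤ 2 * (triE G W1 W3 : ℚ)) :
    (W1 ∩ X).card ≤ (W1 \ X).card := by
  have hE : triE G W1 W3 = triE G W3 (W1 \ X) := by
    rw [triE_comm]
    unfold triE
    apply Finset.sum_congr rfl
    intro w hw
    rw [triDS_split w W1 X, triDS_zero hX (h3X hw) Finset.inter_subset_right, zero_add]
  have hle : triE G W3 (W1 \ X) ≤ W3.card * (W1 \ X).card := triE_le _ _
  have hcard : (W1 ∩ X).card + (W1 \ X).card = W1.card := Finset.card_inter_add_card_sdiff _ _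
  have h3pos : (0 : ℚ) < W3.card := by exact_mod_cast hne3.card_pos
  rw [hE] at h13
  have : ((W1.card : ℚ)) ≤ 2 * (W1 \ X).card := by
    have hcast : (triE G W3 (W1 \ X) : ℚ) ≤ (W3.card : ℚ) * (W1 \ X).card := by
      exact_mod_cast hle
    have h2 : (W1.card : ℚ) * W3.card ≤ (2 * ((W1 \ X).card : ℚ)) * W3.card := by linarith
    exact le_of_mul_le_mul_right h2 h3pos
  have hq : ((W1 ∩ X).card : ℚ) + (W1 \ X).card = W1.card := by exact_mod_cast hcard
  have : ((W1 ∩ X).card : ℚ) ≤ (W1 \ X).card := by linarith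
  exact_mod_cast this

lemma noDeltaStrict (hG : G.CliqueFree 3) {X : Finset α}
    (hX : ∀ x ∈ X, ∀ y ∈ X, ¬ G.Adj x y)
    (W1 W2 W3 : Finset α) (h3X : W3 ⊆ X) (hne3 : W3.Nonempty)
    (h13 : ((W1.card : ℚ) * W3.card) ≤ 2 * (triE G W1 W3 : ℚ))
    (h23 : ((W2.card : ℚ) * W3.card) ≤ 2 * (triE G W2 W3 : ℚ))
    (h12 : ((W1.card : ℚ) * W2.card) < 2 * (triE G W1 W2 : ℚ))
    (hhalf1 : (W1 \ X).card ≤ (W1 ∩ X).card)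
    (hhalf2 : (W2 \ X).card ≤ (W2 ∩ X).card) : False := by
  -- abbreviations
  have hcard1 : (W1 ∩ X).card + (W1 \ X).card = W1.card := Finset.card_inter_add_card_sdiff _ _
  have hcard2 : (W2 ∩ X).card + (W2 \ X).card = W2.card := Finset.card_inter_add_card_sdiff _ _
  have hflip1 := halfFlip hX W1 W3 h3X hne3 h13
  have hflip2 := halfFlip hX W2 W3 h3X hne3 h23
  have hab1 : (W1 ∩ X).card = (W1 \ X).card := le_antisymm hflip1 hhalf1
  have hab2 : (W2 ∩ X).card = (W2 \ X).card := le_antisymm hflip2 hhalf2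
  -- every w ∈ W3 is adjacent to everything in W1 \ X and W2 \ X
  have key : ∀ W : Finset α, (W ∩ X).card + (W \ X).card = W.card →
      (W ∩ X).card = (W \ X).card →
      (((W.card : ℚ) * W3.card) ≤ 2 * (triE G W W3 : ℚ)) →
      ∀ w ∈ W3, ∀ x ∈ W \ X, G.Adj w x := by
    intro W hcard hab hdens w hw x hx
    have hE : triE G W W3 = ∑ w ∈ W3, triDS G w (W \ X) := by
      rw [triE_comm]
      unfold triE
      apply Finset.sum_congr rfl
      intro w' hw'
      rw [triDS_split w' W X, triDS_zero hX (h3X hw') Finset.inter_subset_right, zero_add]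
    -- the sum is ≥ W3.card * (W \ X).card
    have hge : (W3.card * (W \ X).card : ℚ) ≤ (∑ w ∈ W3, triDS G w (W \ X) : ℕ) := by
      rw [← hE]
      have : (W.card : ℚ) = 2 * (W \ X).card := by
        have : ((W ∩ X).card : ℚ) + (W \ X).card = W.card := by exact_mod_cast hcard
        have h2 : ((W ∩ X).card : ℚ) = (W \ X).card := by exact_mod_cast hab
        linarith
      nlinarith [hdens, this]
    have hgeN : W3.card * (W \ X).card ≤ ∑ w ∈ W3, triDS G w (W \ X) := by exact_mod_cast hge
    -- each term is ≤ (W \ X).card, so all terms are equal to it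
    have hall : ∀ w' ∈ W3, triDS G w' (W \ X) = (W \ X).card := by
      by_contra hcon
      push_neg at hcon
      obtain ⟨w', hw', hne⟩ := hcon
      have hlt : ∑ w ∈ W3, triDS G w (W \ X) < ∑ _w ∈ W3, (W \ X).card :=
        Finset.sum_lt_sum (fun i _ => triDS_le i (W \ X))
          ⟨w', hw', lt_of_le_of_ne (triDS_le w' (W \ X)) hne⟩
      rw [Finset.sum_const, smul_eq_mul] at hlt
      omega
    have := hall w hw
    have hfull : (W \ X).filter (G.Adj w) = W \ X :=
      Finset.eq_of_subset_of_card_le (Finset.filter_subset _ _) (by rw [← this]; rfl)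
    have : x ∈ (W \ X).filter (G.Adj w) := by rw [hfull]; exact hx
    exact (Finset.mem_filter.1 this).2
  have key1 := key W1 hcard1 hab1 h13
  have key2 := key W2 hcard2 hab2 h23
  -- no edges between W1 \ X and W2 \ X
  have hf : triE G (W1 \ X) (W2 \ X) = 0 := by
    apply Finset.sum_eq_zero
    intro x hx
    unfold triDS
    rw [Finset.card_eq_zero, Finset.filter_eq_empty_iff]
    intro y hy hadj
    obtain ⟨w, hw⟩ := hne3
    exact hG {w, x, y} (is3Clique_triple_iff.2 ⟨key1 w hw x hx, key2 w hw y hy, hadj⟩)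
  -- bound e12
  have hd : triE G W1 W2 = triE G (W1 ∩ X) (W2 \ X)
      + (triE G (W1 \ X) (W2 ∩ X) + triE G (W1 \ X) (W2 \ X)) := triE_decomp hX W1 W2
  have hb : triE G W1 W2 ≤ (W1 ∩ X).card * (W2 \ X).card + (W1 \ X).card * (W2 ∩ X).card := by
    rw [hd, hf]
    have := triE_le (G := G) (W1 ∩ X) (W2 \ X)
    have := triE_le (G := G) (W1 \ X) (W2 ∩ X)
    omega
  -- contradiction with h12
  have hq : (triE G W1 W2 : ℚ) ≤ ((W1 ∩ X).card : ℚ) * (W2 \ X).card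
      + ((W1 \ X).card : ℚ) * (W2 ∩ X).card := by exact_mod_cast hb
  have e1 : ((W1 ∩ X).card : ℚ) = (W1 \ X).card := by exact_mod_cast hab1
  have e2 : ((W2 ∩ X).card : ℚ) = (W2 \ X).card := by exact_mod_cast hab2
  have n1 : ((W1 ∩ X).card : ℚ) + (W1 \ X).card = W1.card := by exact_mod_cast hcard1
  have n2 : ((W2 ∩ X).card : ℚ) + (W2 \ X).card = W2.card := by exact_mod_cast hcard2
  nlinarith [h12, hq, e1, e2, n1, n2]

lemma noSS {X : Finset α} (hX : ∀ x ∈ X, ∀ y ∈ X, ¬ G.Adj x y)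
    (W1 W3 : Finset α) (h3X : W3 ⊆ X) (hne3 : W3.Nonempty)
    (h13 : ((W1.card : ℚ) * W3.card) ≤ 2 * (triE G W1 W3 : ℚ))
    (hs1 : (W1 \ X).card < (W1 ∩ X).card) : False := by
  have := halfFlip hX W1 W3 h3X hne3 h13
  omega

end TriAux4

section Endgame
lemma endgame1 (A0 A1 A2 B0 B1 B2 e01 e02 e12 : ℚ)
    (hB0 : 0 ≤ B0) (hB1 : 0 ≤ B1) (hB2 : 0 ≤ B2)
    (hb0 : B0 ≤ A0) (hb1 : B1 ≤ A1) (hb2 : B2 ≤ A2)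
    (hE02 : (A0 + B0) * (A2 + B2) ≤ 2 * e02)
    (hE12 : (A1 + B1) * (A2 + B2) ≤ 2 * e12)
    (hgrand : B2 * e01 + B1 * e02 + B0 * e12
      ≤ 2 * (A0 * (B1 * B2) + A1 * (B0 * B2) + A2 * (B0 * B1)))
    (hstrict : (A0 + B0) * (A1 + B1) < 2 * e01) : B2 = 0 := by
  by_contra hne
  have hpos : 0 < B2 := lt_of_le_of_ne hB2 (Ne.symm hne)
  have t1 : 0 < B2 * (2 * e01 - (A0 + B0) * (A1 + B1)) :=
    mul_pos hpos (by linarith)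
  have t2 : 0 ≤ B1 * (2 * e02 - (A0 + B0) * (A2 + B2)) :=
    mul_nonneg hB1 (by linarith)
  have t3 : 0 ≤ B0 * (2 * e12 - (A1 + B1) * (A2 + B2)) :=
    mul_nonneg hB0 (by linarith)
  have t4 : 0 ≤ B2 * ((A0 - B0) * (A1 - B1)) :=
    mul_nonneg hB2 (mul_nonneg (by linarith) (by linarith))
  have t5 : 0 ≤ B1 * ((A0 - B0) * (A2 - B2)) :=
    mul_nonneg hB1 (mul_nonneg (by linarith) (by linarith))
  have t6 : 0 ≤ B0 * ((A1 - B1) * (A2 - B2)) :=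
    mul_nonneg hB0 (mul_nonneg (by linarith) (by linarith))
  nlinarith [t1, t2, t3, t4, t5, t6, hgrand]

lemma endgame2 (A0 A1 A2 B0 B1 B2 e01 e02 e12 : ℚ)
    (hB0 : 0 ≤ B0) (hB1 : 0 ≤ B1) (hB2 : 0 ≤ B2)
    (hb0 : B0 ≤ A0) (hb1 : B1 ≤ A1) (hb2 : B2 ≤ A2)
    (hE01 : (A0 + B0) * (A1 + B1) ≤ 2 * e01)
    (hE02 : (A0 + B0) * (A2 + B2) ≤ 2 * e02)
    (hE12 : (A1 + B1) * (A2 + B2) ≤ 2 * e12)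
    (hgrand : B2 * e01 + B1 * e02 + B0 * e12
      ≤ 2 * (A0 * (B1 * B2) + A1 * (B0 * B2) + A2 * (B0 * B1)))
    (hs0 : B0 < A0) (hs1 : B1 < A1) : B2 = 0 := by
  by_contra hne
  have hpos : 0 < B2 := lt_of_le_of_ne hB2 (Ne.symm hne)
  have t1 : 0 ≤ B2 * (2 * e01 - (A0 + B0) * (A1 + B1)) :=
    mul_nonneg hB2 (by linarith)
  have t2 : 0 ≤ B1 * (2 * e02 - (A0 + B0) * (A2 + B2)) :=
    mul_nonneg hB1 (by linarith)
  have t3 : 0 ≤ B0 * (2 * e12 - (A1 + B1) * (A2 + B2)) :=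
    mul_nonneg hB0 (by linarith)
  have t4 : 0 < B2 * ((A0 - B0) * (A1 - B1)) :=
    mul_pos hpos (mul_pos (by linarith) (by linarith))
  have t5 : 0 ≤ B1 * ((A0 - B0) * (A2 - B2)) :=
    mul_nonneg hB1 (mul_nonneg (by linarith) (by linarith))
  have t6 : 0 ≤ B0 * ((A1 - B1) * (A2 - B2)) :=
    mul_nonneg hB0 (mul_nonneg (by linarith) (by linarith))
  nlinarith [t1, t2, t3, t4, t5, t6, hgrand]
end Endgame
theorem stmt1 {α : Type*} [Fintype α] [DecidableEq α]
    (G : SimpleGraph α) [DecidableRel G.Adj] (V : Fin 3 → Finset α)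
    (hpart : ∀ v : α, ∃! i, v ∈ V i)
    (hind : ∀ i, ∀ x ∈ V i, ∀ y ∈ V i, ¬ G.Adj x y)
    (hne : ∀ i, (V i).Nonempty)
    (X : Finset α)
    (hX : ∀ x ∈ X, ∀ y ∈ X, ¬ G.Adj x y)
    (hdens : ∀ i j, i ≠ j → (1 : ℚ) / 2 ≤ G.edgeDensity (V i) (V j))
    (hXhalf : ∀ i, ((V i).card : ℚ) / 2 ≤ ((X ∩ V i).card : ℚ))
    (hstrict : ∃ a b : Fin 6, a ≠ b ∧
      (![ (1 : ℚ) / 2 < G.edgeDensity (V 0) (V 1),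
          (1 : ℚ) / 2 < G.edgeDensity (V 0) (V 2),
          (1 : ℚ) / 2 < G.edgeDensity (V 1) (V 2),
          ((V 0).card : ℚ) / 2 < ((X ∩ V 0).card : ℚ),
          ((V 1).card : ℚ) / 2 < ((X ∩ V 1).card : ℚ),
          ((V 2).card : ℚ) / 2 < ((X ∩ V 2).card : ℚ) ] a) ∧
      (![ (1 : ℚ) / 2 < G.edgeDensity (V 0) (V 1),
          (1 : ℚ) / 2 < G.edgeDensity (V 0) (V 2),
          (1 : ℚ) / 2 < G.edgeDensity (V 1) (V 2),
          ((V 0).card : ℚ) / 2 < ((X ∩ V 0).card : ℚ),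
          ((V 1).card : ℚ) / 2 < ((X ∩ V 1).card : ℚ),
          ((V 2).card : ℚ) / 2 < ((X ∩ V 2).card : ℚ) ] b)) :
    ¬ G.CliqueFree 3 := by
  intro hG
  have hn : ∀ i : Fin 3, ((V i ∩ X).card : ℚ) + ((V i \ X).card : ℚ) = ((V i).card : ℚ) :=
    fun i => by exact_mod_cast Finset.card_inter_add_card_sdiff (V i) X
  have hb : ∀ i : Fin 3, (V i \ X).card ≤ (V i ∩ X).card := by
    intro i
    have h := hXhalf i
    rw [Finset.inter_comm] at h
    have : ((V i \ X).card : ℚ) ≤ ((V i ∩ X).card : ℚ) := by linarith [hn i]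
    exact_mod_cast this
  have hbQ : ∀ i : Fin 3, ((V i \ X).card : ℚ) ≤ ((V i ∩ X).card : ℚ) :=
    fun i => by exact_mod_cast hb i
  have hBnn : ∀ i : Fin 3, (0 : ℚ) ≤ ((V i \ X).card : ℚ) := fun i => by positivity
  have grandN := grand hG hX (V 0) (V 1) (V 2) (hb 0) (hb 1) (hb 2)
  have grandQ : ((V 2 \ X).card : ℚ) * (triE G (V 0) (V 1) : ℚ)
      + ((V 1 \ X).card : ℚ) * (triE G (V 0) (V 2) : ℚ)
      + ((V 0 \ X).card : ℚ) * (triE G (V 1) (V 2) : ℚ)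
      ≤ 2 * (((V 0 ∩ X).card : ℚ) * (((V 1 \ X).card : ℚ) * ((V 2 \ X).card : ℚ))
        + ((V 1 ∩ X).card : ℚ) * (((V 0 \ X).card : ℚ) * ((V 2 \ X).card : ℚ))
        + ((V 2 ∩ X).card : ℚ) * (((V 0 \ X).card : ℚ) * ((V 1 \ X).card : ℚ))) := by
    exact_mod_cast grandN
  have E01 := dens_ge (hne 0) (hne 1) (hdens 0 1 (by decide))
  have E02 := dens_ge (hne 0) (hne 2) (hdens 0 2 (by decide))
  have E12 := dens_ge (hne 1) (hne 2) (hdens 1 2 (by decide))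
  have E01' : (((V 0 ∩ X).card : ℚ) + ((V 0 \ X).card : ℚ))
      * (((V 1 ∩ X).card : ℚ) + ((V 1 \ X).card : ℚ)) ≤ 2 * (triE G (V 0) (V 1) : ℚ) := by
    rw [hn 0, hn 1]; exact E01
  have E02' : (((V 0 ∩ X).card : ℚ) + ((V 0 \ X).card : ℚ))
      * (((V 2 ∩ X).card : ℚ) + ((V 2 \ X).card : ℚ)) ≤ 2 * (triE G (V 0) (V 2) : ℚ) := by
    rw [hn 0, hn 2]; exact E02
  have E12' : (((V 1 ∩ X).card : ℚ) + ((V 1 \ X).card : ℚ))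
      * (((V 2 ∩ X).card : ℚ) + ((V 2 \ X).card : ℚ)) ≤ 2 * (triE G (V 1) (V 2) : ℚ) := by
    rw [hn 1, hn 2]; exact E12
  -- turning B_k = 0 into a subset fact
  have subX : ∀ i : Fin 3, ((V i \ X).card : ℚ) = 0 → V i ⊆ X := by
    intro i h
    rw [← Finset.sdiff_eq_empty_iff_subset, ← Finset.card_eq_zero]
    exact_mod_cast h
  -- no strict density inequality can hold
  have ND01 : ¬ ((1 : ℚ) / 2 < G.edgeDensity (V 0) (V 1)) := by
    intro hlt
    have hstr := dens_gt (hne 0) (hne 1) hlt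
    have hstr' : (((V 0 ∩ X).card : ℚ) + ((V 0 \ X).card : ℚ))
        * (((V 1 ∩ X).card : ℚ) + ((V 1 \ X).card : ℚ)) < 2 * (triE G (V 0) (V 1) : ℚ) := by
      rw [hn 0, hn 1]; exact hstr
    have hB2 : ((V 2 \ X).card : ℚ) = 0 :=
      endgame1 ((V 0 ∩ X).card : ℚ) ((V 1 ∩ X).card : ℚ) ((V 2 ∩ X).card : ℚ) ((V 0 \ X).card : ℚ) ((V 1 \ X).card : ℚ) ((V 2 \ X).card : ℚ) (triE G (V 0) (V 1) : ℚ) (triE G (V 0) (V 2) : ℚ) (triE G (V 1) (V 2) : ℚ)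
        (hBnn 0) (hBnn 1) (hBnn 2) (hbQ 0) (hbQ 1) (hbQ 2)
        E02' E12' grandQ hstr'
    exact noDeltaStrict hG hX (V 0) (V 1) (V 2) (subX 2 hB2) (hne 2) E02 E12 hstr (hb 0) (hb 1)
  have ND02 : ¬ ((1 : ℚ) / 2 < G.edgeDensity (V 0) (V 2)) := by
    intro hlt
    have hstr := dens_gt (hne 0) (hne 2) hlt
    have hstr' : (((V 0 ∩ X).card : ℚ) + ((V 0 \ X).card : ℚ))
        * (((V 2 ∩ X).card : ℚ) + ((V 2 \ X).card : ℚ)) < 2 * (triE G (V 0) (V 2) : ℚ) := by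
      rw [hn 0, hn 2]; exact hstr
    have hB1 : ((V 1 \ X).card : ℚ) = 0 :=
      endgame1 ((V 0 ∩ X).card : ℚ) ((V 2 ∩ X).card : ℚ) ((V 1 ∩ X).card : ℚ) ((V 0 \ X).card : ℚ) ((V 2 \ X).card : ℚ) ((V 1 \ X).card : ℚ) (triE G (V 0) (V 2) : ℚ) (triE G (V 0) (V 1) : ℚ) (triE G (V 1) (V 2) : ℚ)
        (hBnn 0) (hBnn 2) (hBnn 1) (hbQ 0) (hbQ 2) (hbQ 1)
        (by linarith [E01']) (by linarith [E12']) (by linarith [grandQ]) hstr'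
    exact noDeltaStrict hG hX (V 0) (V 2) (V 1) (subX 1 hB1) (hne 1)
      (dens_ge (hne 0) (hne 1) (hdens 0 1 (by decide)))
      (dens_ge (hne 2) (hne 1) (hdens 2 1 (by decide))) hstr (hb 0) (hb 2)
  have ND12 : ¬ ((1 : ℚ) / 2 < G.edgeDensity (V 1) (V 2)) := by
    intro hlt
    have hstr := dens_gt (hne 1) (hne 2) hlt
    have hstr' : (((V 1 ∩ X).card : ℚ) + ((V 1 \ X).card : ℚ))
        * (((V 2 ∩ X).card : ℚ) + ((V 2 \ X).card : ℚ)) < 2 * (triE G (V 1) (V 2) : ℚ) := by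
      rw [hn 1, hn 2]; exact hstr
    have hB0 : ((V 0 \ X).card : ℚ) = 0 :=
      endgame1 ((V 1 ∩ X).card : ℚ) ((V 2 ∩ X).card : ℚ) ((V 0 ∩ X).card : ℚ) ((V 1 \ X).card : ℚ) ((V 2 \ X).card : ℚ) ((V 0 \ X).card : ℚ) (triE G (V 1) (V 2) : ℚ) (triE G (V 0) (V 1) : ℚ) (triE G (V 0) (V 2) : ℚ)
        (hBnn 1) (hBnn 2) (hBnn 0) (hbQ 1) (hbQ 2) (hbQ 0)
        (by linarith [E01']) (by linarith [E02']) (by linarith [grandQ]) hstr'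
    exact noDeltaStrict hG hX (V 1) (V 2) (V 0) (subX 0 hB0) (hne 0)
      (dens_ge (hne 1) (hne 0) (hdens 1 0 (by decide)))
      (dens_ge (hne 2) (hne 0) (hdens 2 0 (by decide))) hstr (hb 1) (hb 2)
  -- converting strict X-half inequalities
  have sconv : ∀ i : Fin 3, ((V i).card : ℚ) / 2 < ((X ∩ V i).card : ℚ) →
      ((V i \ X).card : ℚ) < ((V i ∩ X).card : ℚ) := by
    intro i h
    rw [Finset.inter_comm] at h
    linarith [hn i]
  -- no two strict X-half inequalities can hold
  have NS01 : ((V 0).card : ℚ) / 2 < ((X ∩ V 0).card : ℚ) →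
      ((V 1).card : ℚ) / 2 < ((X ∩ V 1).card : ℚ) → False := by
    intro h0 h1
    have hs0 := sconv 0 h0
    have hs1 := sconv 1 h1
    have hB2 : ((V 2 \ X).card : ℚ) = 0 :=
      endgame2 ((V 0 ∩ X).card : ℚ) ((V 1 ∩ X).card : ℚ) ((V 2 ∩ X).card : ℚ) ((V 0 \ X).card : ℚ) ((V 1 \ X).card : ℚ) ((V 2 \ X).card : ℚ) (triE G (V 0) (V 1) : ℚ) (triE G (V 0) (V 2) : ℚ) (triE G (V 1) (V 2) : ℚ)
        (hBnn 0) (hBnn 1) (hBnn 2) (hbQ 0) (hbQ 1) (hbQ 2)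
        E01' E02' E12' grandQ hs0 hs1
    exact noSS hX (V 0) (V 2) (subX 2 hB2) (hne 2) E02 (by exact_mod_cast hs0)
  have NS02 : ((V 0).card : ℚ) / 2 < ((X ∩ V 0).card : ℚ) →
      ((V 2).card : ℚ) / 2 < ((X ∩ V 2).card : ℚ) → False := by
    intro h0 h2
    have hs0 := sconv 0 h0
    have hs2 := sconv 2 h2
    have hB1 : ((V 1 \ X).card : ℚ) = 0 :=
      endgame2 ((V 0 ∩ X).card : ℚ) ((V 2 ∩ X).card : ℚ) ((V 1 ∩ X).card : ℚ) ((V 0 \ X).card : ℚ) ((V 2 \ X).card : ℚ) ((V 1 \ X).card : ℚ) (triE G (V 0) (V 2) : ℚ) (triE G (V 0) (V 1) : ℚ) (triE G (V 1) (V 2) : ℚ)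
        (hBnn 0) (hBnn 2) (hBnn 1) (hbQ 0) (hbQ 2) (hbQ 1)
        (by linarith [E02']) (by linarith [E01']) (by linarith [E12'])
        (by linarith [grandQ]) hs0 hs2
    exact noSS hX (V 0) (V 1) (subX 1 hB1) (hne 1) E01 (by exact_mod_cast hs0)
  have NS12 : ((V 1).card : ℚ) / 2 < ((X ∩ V 1).card : ℚ) →
      ((V 2).card : ℚ) / 2 < ((X ∩ V 2).card : ℚ) → False := by
    intro h1 h2
    have hs1 := sconv 1 h1
    have hs2 := sconv 2 h2
    have hB0 : ((V 0 \ X).card : ℚ) = 0 :=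
      endgame2 ((V 1 ∩ X).card : ℚ) ((V 2 ∩ X).card : ℚ) ((V 0 ∩ X).card : ℚ) ((V 1 \ X).card : ℚ) ((V 2 \ X).card : ℚ) ((V 0 \ X).card : ℚ) (triE G (V 1) (V 2) : ℚ) (triE G (V 0) (V 1) : ℚ) (triE G (V 0) (V 2) : ℚ)
        (hBnn 1) (hBnn 2) (hBnn 0) (hbQ 1) (hbQ 2) (hbQ 0)
        (by linarith [E12']) (by linarith [E01']) (by linarith [E02'])
        (by linarith [grandQ]) hs1 hs2
    exact noSS hX (V 1) (V 0) (subX 0 hB0) (hne 0)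
      (dens_ge (hne 1) (hne 0) (hdens 1 0 (by decide))) (by exact_mod_cast hs1)
  -- final case analysis
  obtain ⟨i, j, hij, hi, hj⟩ := hstrict
  fin_cases i <;> fin_cases j <;>
    simp only [Matrix.cons_val_zero, Matrix.cons_val_one, Matrix.head_cons,
      Matrix.cons_val_two, Matrix.cons_val_three, Matrix.cons_val_four,
      Matrix.vecHead, Matrix.vecTail, Matrix.cons_val_succ,
      Function.comp_apply, Fin.isValue] at hi hj <;>
    first
      | exact absurd rfl hij
      | exact ND01 hi
      | exact ND02 hi
      | exact ND12 hi
      | exact ND01 hj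
      | exact ND02 hj
      | exact ND12 hj
      | exact NS01 hi hj
      | exact NS01 hj hi
      | exact NS02 hi hj
      | exact NS02 hj hi
      | exact NS12 hi hj
      | exact NS12 hj hi
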